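/- Let X be a normed quasi-algebra with Hausdorff metric h. Then for all x, y, z ∈ X, h(x*y, x*z) ≤ ‖x‖ · h(y, z). -/

import Mathlib

/-- A quasi-algebra in the sense of Aseev/Dehghanizade–Modarres: a partially
ordered set with addition, zero, real scalar multiplication and a product. -/
structure QuasiAlgebra (X : Type*) [PartialOrder X] where
  add : X → X → X
  zero : X
  smul : ℝ → X → X
  mul : X → X → X
  add_comm : ∀ x y, add x y = add y x
  add_assoc : ∀ x y z, add x (add y z) = add (add x y) z
  add_zero : ∀ x, add x zero = x
  smul_smul : ∀ (α β : ℝ) (x : X), smul α (smul β x) = smul (α * β) x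
  smul_add : ∀ (α : ℝ) (x y : X), smul α (add x y) = add (smul α x) (smul α y)
  one_smul : ∀ x, smul 1 x = x
  zero_smul : ∀ x, smul 0 x = zero
  add_smul_le : ∀ (α β : ℝ) (x : X), smul (α + β) x ≤ add (smul α x) (smul β x)
  add_le_add : ∀ {x y z v : X}, x ≤ y → z ≤ v → add x z ≤ add y v
  smul_le_smul : ∀ (α : ℝ) {x y : X}, x ≤ y → smul α x ≤ smul α y
  mul_assoc : ∀ x y z, mul x (mul y z) = mul (mul x y) z
  smul_mul : ∀ (α : ℝ) (x y : X), smul α (mul x y) = mul (smul α x) y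
  mul_smul : ∀ (α : ℝ) (x y : X), smul α (mul x y) = mul x (smul α y)
  zero_mul_zero : mul zero zero = zero
  mul_add_le : ∀ x y z, mul x (add y z) ≤ add (mul x y) (mul x z)
  add_mul_le : ∀ x y z, mul (add x y) z ≤ add (mul x z) (mul y z)
  mul_le_mul : ∀ {x y z v : X}, x ≤ y → z ≤ v → mul x z ≤ mul y v

namespace QuasiAlgebra

variable {X : Type*} [PartialOrder X]

/-- `-x = (-1)·x`. -/
def neg (Q : QuasiAlgebra X) (x : X) : X := Q.smul (-1) x

/-- `x - y = x + (-y)`. -/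
def sub (Q : QuasiAlgebra X) (x y : X) : X := Q.add x (Q.neg y)

/-- An element is regular if it has an additive inverse. -/
def Regular (Q : QuasiAlgebra X) (x : X) : Prop := ∃ x' : X, Q.add x x' = Q.zero

/-- A norm on a quasi-algebra. -/
structure Norm (Q : QuasiAlgebra X) where
  norm : X → ℝ
  norm_pos : ∀ {x : X}, x ≠ Q.zero → 0 < norm x
  norm_add : ∀ x y, norm (Q.add x y) ≤ norm x + norm y
  norm_smul : ∀ (α : ℝ) (x : X), norm (Q.smul α x) = |α| * norm x
  norm_mul : ∀ x y, norm (Q.mul x y) ≤ norm x * norm y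
  norm_mono : ∀ {x y : X}, x ≤ y → norm x ≤ norm y
  le_of_forall_eps : ∀ {x y : X},
    (∀ ε : ℝ, 0 < ε → ∃ z : X, x ≤ Q.add y z ∧ norm z ≤ ε) → x ≤ y

/-- The Hausdorff metric of a normed quasi-algebra. -/
noncomputable def hmet (Q : QuasiAlgebra X) (N : Q.Norm) (x y : X) : ℝ :=
  sInf {r : ℝ | 0 ≤ r ∧ ∃ a₁ a₂ : X,
    x ≤ Q.add y a₁ ∧ y ≤ Q.add x a₂ ∧ N.norm a₁ ≤ r ∧ N.norm a₂ ≤ r}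

end QuasiAlgebra


namespace QuasiAlgebraAux

open QuasiAlgebra

variable {X : Type*} [PartialOrder X] (Q : QuasiAlgebra X) (N : Q.Norm)

lemma norm_zero : N.norm Q.zero = 0 := by
  have h := N.norm_smul 0 Q.zero
  rw [Q.zero_smul] at h
  simpa using h

lemma norm_nonneg (x : X) : 0 ≤ N.norm x := by
  by_cases h : x = Q.zero
  · rw [h, norm_zero]
  · exact (N.norm_pos h).le

lemma zero_le_sub (zz : X) : Q.zero ≤ Q.add zz (Q.smul (-1) zz) := by
  have h := Q.add_smul_le 1 (-1) zz
  rw [show (1 : ℝ) + (-1) = 0 by ring, Q.zero_smul, Q.one_smul] at h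
  exact h

lemma le_add_sub (a b : X) : a ≤ Q.add b (Q.add a (Q.smul (-1) b)) := by
  have h1 : a ≤ Q.add a (Q.add b (Q.smul (-1) b)) := by
    have := Q.add_le_add (le_refl a) (zero_le_sub Q b)
    rwa [Q.add_zero] at this
  calc a ≤ Q.add a (Q.add b (Q.smul (-1) b)) := h1
    _ = Q.add b (Q.add a (Q.smul (-1) b)) := by
        rw [Q.add_assoc, Q.add_assoc, Q.add_comm a b]

lemma hset_nonempty (a b : X) :
    Set.Nonempty {r : ℝ | 0 ≤ r ∧ ∃ a₁ a₂ : X,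
      a ≤ Q.add b a₁ ∧ b ≤ Q.add a a₂ ∧ N.norm a₁ ≤ r ∧ N.norm a₂ ≤ r} := by
  refine ⟨max (N.norm (Q.add a (Q.smul (-1) b))) (N.norm (Q.add b (Q.smul (-1) a))),
    le_trans (norm_nonneg Q N _) (le_max_left _ _),
    Q.add a (Q.smul (-1) b), Q.add b (Q.smul (-1) a),
    le_add_sub Q a b, le_add_sub Q b a, le_max_left _ _, le_max_right _ _⟩

lemma hset_bdd (a b : X) :
    BddBelow {r : ℝ | 0 ≤ r ∧ ∃ a₁ a₂ : X,
      a ≤ Q.add b a₁ ∧ b ≤ Q.add a a₂ ∧ N.norm a₁ ≤ r ∧ N.norm a₂ ≤ r} :=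
  ⟨0, fun r hr => hr.1⟩

end QuasiAlgebraAux

/-- `h(x*y, x*z) ≤ ‖x‖ · h(y,z)`. -/
theorem stmt_2 {X : Type*} [PartialOrder X] (Q : QuasiAlgebra X) (N : Q.Norm)
    (x y z : X) :
    Q.hmet N (Q.mul x y) (Q.mul x z) ≤ N.norm x * Q.hmet N y z := by
  classical
  open QuasiAlgebraAux in
  set S : Set ℝ := {r : ℝ | 0 ≤ r ∧ ∃ a₁ a₂ : X,
      y ≤ Q.add z a₁ ∧ z ≤ Q.add y a₂ ∧ N.norm a₁ ≤ r ∧ N.norm a₂ ≤ r} with hS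
  have hSne : S.Nonempty := hset_nonempty Q N y z
  have hxnn : 0 ≤ N.norm x := norm_nonneg Q N x
  have key : ∀ r ∈ S, Q.hmet N (Q.mul x y) (Q.mul x z) ≤ N.norm x * r := by
    rintro r ⟨hr0, a₁, a₂, h1, h2, hn1, hn2⟩
    apply csInf_le (hset_bdd Q N _ _)
    refine ⟨mul_nonneg hxnn hr0, Q.mul x a₁, Q.mul x a₂, ?_, ?_, ?_, ?_⟩
    · exact le_trans (Q.mul_le_mul (le_refl x) h1) (Q.mul_add_le x z a₁)
    · exact le_trans (Q.mul_le_mul (le_refl x) h2) (Q.mul_add_le x y a₂)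
    · exact le_trans (N.norm_mul x a₁) (mul_le_mul_of_nonneg_left hn1 hxnn)
    · exact le_trans (N.norm_mul x a₂) (mul_le_mul_of_nonneg_left hn2 hxnn)
  have hd : Q.hmet N y z = sInf S := rfl
  refine le_of_forall_pos_le_add fun ε hε => ?_
  obtain ⟨r, hrS, hrlt⟩ := Real.lt_sInf_add_pos hSne
    (show (0:ℝ) < ε / (N.norm x + 1) by positivity)
  calc Q.hmet N (Q.mul x y) (Q.mul x z) ≤ N.norm x * r := key r hrS
    _ ≤ N.norm x * (sInf S + ε / (N.norm x + 1)) :=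
        mul_le_mul_of_nonneg_left hrlt.le hxnn
    _ = N.norm x * sInf S + N.norm x * (ε / (N.norm x + 1)) := by ring
    _ ≤ N.norm x * Q.hmet N y z + ε := by
        rw [hd]
        refine add_le_add (le_refl _) ?_
        rw [mul_div_assoc']
        rw [div_le_iff₀ (by positivity)]
        nlinarith
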